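/- Let ξ, η ∈ 𝔽_q \ {0} and ξ′ ∈ 𝔽_q \ {0, 1}. Let N be the number of ordered pairs (g, h) ∈ GL_2(𝔽_q) × GL_2(𝔽_q) with g conjugate to r(ξ), h conjugate to r(η), and g·h = [[ξ′, 1], [0, ξ′]]. Then: N = 2q if ξ = η = ξ′; N = q if ξ′² = ξη and ξ′ ∉ {ξ, η}; and N = 0 in all other cases (in particular whenever ξ′² ≠ ξη). -/
import Mathlib


open Matrix

variable {F : Type*} [Field F] [Fintype F] [DecidableEq F]

/-- The representative reflection of modified type `(1)_{t-ξ}`: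
`diag(ξ, 1)` if `ξ ≠ 1`, and the transvection `[[1,1],[0,1]]` if `ξ = 1`. -/
def refl2 (ξ : F) : Matrix (Fin 2) (Fin 2) F :=
  if ξ = 1 then !![1, 1; 0, 1] else !![ξ, 0; 0, 1]

set_option linter.unusedSectionVars false

noncomputable def mkGL (M : Matrix (Fin 2) (Fin 2) F) (h : M.det ≠ 0) : GL (Fin 2) F :=
  Matrix.nonsingInvUnit M (isUnit_iff_ne_zero.mpr h)

@[simp] lemma mkGL_val (M : Matrix (Fin 2) (Fin 2) F) (h : M.det ≠ 0) :
    ((mkGL M h : GL (Fin 2) F) : Matrix (Fin 2) (Fin 2) F) = M := rfl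

lemma conj_of_eq_mul (u : GL (Fin 2) F) (P C : Matrix (Fin 2) (Fin 2) F)
    (hP : P.det ≠ 0) (h : (u : Matrix (Fin 2) (Fin 2) F) * P = P * C) :
    ∃ z : GL (Fin 2) F, ((z * u * z⁻¹ : GL (Fin 2) F) : Matrix (Fin 2) (Fin 2) F) = C := by
  refine ⟨(mkGL P hP)⁻¹, ?_⟩
  have hPu : IsUnit P.det := isUnit_iff_ne_zero.mpr hP
  have : (((mkGL P hP)⁻¹ * u * ((mkGL P hP)⁻¹)⁻¹ : GL (Fin 2) F) : Matrix (Fin 2) (Fin 2) F)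
      = P⁻¹ * ((u : Matrix (Fin 2) (Fin 2) F) * P) := by
    simp [Matrix.coe_units_inv, Matrix.mul_assoc]
  rw [this, h, ← Matrix.mul_assoc, Matrix.nonsing_inv_mul P hPu, Matrix.one_mul]

lemma conj_to_companion (u : GL (Fin 2) F)
    (hns : (u : Matrix (Fin 2) (Fin 2) F) 1 0 ≠ 0 ∨ (u : Matrix (Fin 2) (Fin 2) F) 0 1 ≠ 0 ∨
      (u : Matrix (Fin 2) (Fin 2) F) 0 0 ≠ (u : Matrix (Fin 2) (Fin 2) F) 1 1) :
    ∃ z : GL (Fin 2) F, ((z * u * z⁻¹ : GL (Fin 2) F) : Matrix (Fin 2) (Fin 2) F)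
      = !![0, -(u : Matrix (Fin 2) (Fin 2) F).det; 1, (u : Matrix (Fin 2) (Fin 2) F).trace] := by
  set M : Matrix (Fin 2) (Fin 2) F := (u : Matrix (Fin 2) (Fin 2) F) with hM
  set a := M 0 0; set b := M 0 1; set c := M 1 0; set d := M 1 1
  have hMe : (u : Matrix (Fin 2) (Fin 2) F) = !![a, b; c, d] := Matrix.eta_fin_two M
  have hdet : M.det = a * d - b * c := by rw [hM, hMe]; simp [Matrix.det_fin_two_of]
  have htr : M.trace = a + d := by rw [hM, hMe]; simp [Matrix.trace_fin_two_of]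
  rcases hns with hc | hb | had
  · refine conj_of_eq_mul u !![1, a; 0, c] _ (by simp [Matrix.det_fin_two_of, hc]) ?_
    rw [hdet, htr, hMe]
    ext i j
    fin_cases i <;> fin_cases j <;>
      simp [Matrix.mul_apply, Fin.sum_univ_two] <;> ring
  · by_cases hc : c ≠ 0
    · refine conj_of_eq_mul u !![1, a; 0, c] _ (by simp [Matrix.det_fin_two_of, hc]) ?_
      rw [hdet, htr, hMe]
      ext i j
      fin_cases i <;> fin_cases j <;>
        simp [Matrix.mul_apply, Fin.sum_univ_two] <;> ring
    · push_neg at hc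
      refine conj_of_eq_mul u !![0, b; 1, d] _ (by simp [Matrix.det_fin_two_of, hb]) ?_
      rw [hdet, htr, hMe, hc]
      ext i j
      fin_cases i <;> fin_cases j <;>
        simp [Matrix.mul_apply, Fin.sum_univ_two] <;> ring
  · by_cases hc : c ≠ 0
    · refine conj_of_eq_mul u !![1, a; 0, c] _ (by simp [Matrix.det_fin_two_of, hc]) ?_
      rw [hdet, htr, hMe]
      ext i j
      fin_cases i <;> fin_cases j <;>
        simp [Matrix.mul_apply, Fin.sum_univ_two] <;> ring
    · push_neg at hc
      by_cases hb : b ≠ 0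
      · refine conj_of_eq_mul u !![0, b; 1, d] _ (by simp [Matrix.det_fin_two_of, hb]) ?_
        rw [hdet, htr, hMe, hc]
        ext i j
        fin_cases i <;> fin_cases j <;>
          simp [Matrix.mul_apply, Fin.sum_univ_two] <;> ring
      · push_neg at hb
        refine conj_of_eq_mul u !![1, a; 1, d] _ ?_ ?_
        · have : (!![1, a; 1, d] : Matrix (Fin 2) (Fin 2) F).det = d - a := by
            simp [Matrix.det_fin_two_of]
          rw [this]; exact sub_ne_zero.mpr (Ne.symm had)
        · rw [hdet, htr, hMe, hc, hb]
          ext i j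
          fin_cases i <;> fin_cases j <;>
            simp [Matrix.mul_apply, Fin.sum_univ_two] <;> ring


lemma refl2_trace (ξ : F) : (refl2 ξ).trace = ξ + 1 := by
  unfold refl2; split <;> simp_all [Matrix.trace_fin_two_of]

lemma refl2_det (ξ : F) : (refl2 ξ).det = ξ := by
  unfold refl2; split <;> simp_all [Matrix.det_fin_two_of]

lemma refl2_ne_one (ξ : F) : refl2 ξ ≠ 1 := by
  unfold refl2; split_ifs with h
  · intro hh
    have := congrFun (congrFun hh 0) 1
    simp [Matrix.one_apply] at this
  · intro hh
    have := congrFun (congrFun hh 0) 0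
    simp [Matrix.one_apply] at this
    exact h this

lemma conj_iff (ξ : F) (hξ : ξ ≠ 0) (g : GL (Fin 2) F) :
    (∃ z : GL (Fin 2) F, ((z * g * z⁻¹ : GL (Fin 2) F) : Matrix (Fin 2) (Fin 2) F) = refl2 ξ) ↔
      ((g : Matrix (Fin 2) (Fin 2) F).trace = ξ + 1 ∧ (g : Matrix (Fin 2) (Fin 2) F).det = ξ ∧
        (g : Matrix (Fin 2) (Fin 2) F) ≠ 1) := by
  constructor
  · rintro ⟨z, hz⟩
    have hval : ((z * g * z⁻¹ : GL (Fin 2) F) : Matrix (Fin 2) (Fin 2) F)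
        = (z : Matrix (Fin 2) (Fin 2) F) * (g : Matrix (Fin 2) (Fin 2) F)
          * ((z⁻¹ : GL (Fin 2) F) : Matrix (Fin 2) (Fin 2) F) := rfl
    rw [hval] at hz
    refine ⟨?_, ?_, ?_⟩
    · have := Matrix.trace_units_conj z (g : Matrix (Fin 2) (Fin 2) F)
      rw [hz] at this
      rw [← this, refl2_trace]
    · have := Matrix.det_units_conj z (g : Matrix (Fin 2) (Fin 2) F)
      rw [hz] at this
      rw [← this, refl2_det]
    · intro h1
      apply refl2_ne_one ξ
      rw [← hz, h1, mul_one, ← Units.val_mul, mul_inv_cancel, Units.val_one]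
  · rintro ⟨htr, hdet, hne⟩
    have hns : (g : Matrix (Fin 2) (Fin 2) F) 1 0 ≠ 0 ∨ (g : Matrix (Fin 2) (Fin 2) F) 0 1 ≠ 0 ∨
        (g : Matrix (Fin 2) (Fin 2) F) 0 0 ≠ (g : Matrix (Fin 2) (Fin 2) F) 1 1 := by
      by_contra hcon
      push_neg at hcon
      obtain ⟨hc, hb, had⟩ := hcon
      set a := (g : Matrix (Fin 2) (Fin 2) F) 0 0 with ha
      have hge : (g : Matrix (Fin 2) (Fin 2) F) = !![a, 0; 0, a] := by
        rw [Matrix.eta_fin_two (g : Matrix (Fin 2) (Fin 2) F), hb, hc, ← had]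
      rw [hge] at htr hdet hne
      rw [Matrix.trace_fin_two_of] at htr
      rw [Matrix.det_fin_two_of] at hdet
      have ha1 : a = 1 := by
        have h2 : (a - 1) ^ 2 = 0 := by linear_combination hdet - htr
        have h3 := pow_eq_zero_iff (n := 2) (by norm_num) |>.mp h2
        have := sub_eq_zero.mp h3
        exact this
      apply hne
      rw [ha1]
      exact (Matrix.one_fin_two).symm
    obtain ⟨z₁, hz₁⟩ := conj_to_companion g hns
    rw [htr, hdet] at hz₁
    have hr : (refl2 ξ).det ≠ 0 := by rw [refl2_det]; exact hξ
    set R := mkGL (refl2 ξ) hr with hR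
    have hRval : (R : Matrix (Fin 2) (Fin 2) F) = refl2 ξ := rfl
    have hnsR : (R : Matrix (Fin 2) (Fin 2) F) 1 0 ≠ 0 ∨
        (R : Matrix (Fin 2) (Fin 2) F) 0 1 ≠ 0 ∨
        (R : Matrix (Fin 2) (Fin 2) F) 0 0 ≠ (R : Matrix (Fin 2) (Fin 2) F) 1 1 := by
      rw [hRval]; unfold refl2; split_ifs with h
      · right; left; simp
      · right; right; simpa using h
    obtain ⟨z₂, hz₂⟩ := conj_to_companion R hnsR
    rw [hRval, refl2_trace, refl2_det] at hz₂
    have key : z₁ * g * z₁⁻¹ = z₂ * R * z₂⁻¹ := Units.ext (hz₁.trans hz₂.symm)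
    refine ⟨z₂⁻¹ * z₁, ?_⟩
    have e1 : (z₂⁻¹ * z₁) * g * (z₂⁻¹ * z₁)⁻¹ = z₂⁻¹ * (z₁ * g * z₁⁻¹) * z₂ := by group
    have e2 : z₂⁻¹ * (z₂ * R * z₂⁻¹) * z₂ = R := by group
    rw [e1, key, e2, hRval]

lemma sol_form (ξ η ξ' : F) (g h : GL (Fin 2) F)
    (htrg : (g : Matrix (Fin 2) (Fin 2) F).trace = ξ + 1)
    (hdetg : (g : Matrix (Fin 2) (Fin 2) F).det = ξ)
    (htrh : (h : Matrix (Fin 2) (Fin 2) F).trace = η + 1)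
    (hdeth : (h : Matrix (Fin 2) (Fin 2) F).det = η)
    (hmul : ((g * h : GL (Fin 2) F) : Matrix (Fin 2) (Fin 2) F) = !![ξ', 1; 0, ξ']) :
    ξ' ^ 2 = ξ * η ∧ (g : Matrix (Fin 2) (Fin 2) F) 1 0 = ξ' * (ξ + 1) - ξ * (η + 1) := by
  set a := (g : Matrix (Fin 2) (Fin 2) F) 0 0
  set b := (g : Matrix (Fin 2) (Fin 2) F) 0 1
  set c := (g : Matrix (Fin 2) (Fin 2) F) 1 0
  set d := (g : Matrix (Fin 2) (Fin 2) F) 1 1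
  set p := (h : Matrix (Fin 2) (Fin 2) F) 0 0
  set q := (h : Matrix (Fin 2) (Fin 2) F) 0 1
  set r := (h : Matrix (Fin 2) (Fin 2) F) 1 0
  set s := (h : Matrix (Fin 2) (Fin 2) F) 1 1
  have hm : (g : Matrix (Fin 2) (Fin 2) F) * (h : Matrix (Fin 2) (Fin 2) F)
      = !![ξ', 1; 0, ξ'] := by rw [← Units.val_mul]; exact hmul
  have e00 : a * p + b * r = ξ' := by
    have := congrFun (congrFun hm 0) 0
    simpa [Matrix.mul_apply, Fin.sum_univ_two] using this
  have e01 : a * q + b * s = 1 := by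
    have := congrFun (congrFun hm 0) 1
    simpa [Matrix.mul_apply, Fin.sum_univ_two] using this
  have e10 : c * p + d * r = 0 := by
    have := congrFun (congrFun hm 1) 0
    simpa [Matrix.mul_apply, Fin.sum_univ_two] using this
  have e11 : c * q + d * s = ξ' := by
    have := congrFun (congrFun hm 1) 1
    simpa [Matrix.mul_apply, Fin.sum_univ_two] using this
  have htrg' : a + d = ξ + 1 := by rw [Matrix.trace_fin_two] at htrg; exact htrg
  have hdetg' : a * d - b * c = ξ := by rw [Matrix.det_fin_two] at hdetg; exact hdetg
  have htrh' : p + s = η + 1 := by rw [Matrix.trace_fin_two] at htrh; exact htrh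
  constructor
  · have hd : ((g : Matrix (Fin 2) (Fin 2) F) * (h : Matrix (Fin 2) (Fin 2) F)).det = ξ' ^ 2 := by
      rw [hm, Matrix.det_fin_two_of]; ring
    rw [Matrix.det_mul, hdetg, hdeth] at hd
    exact hd.symm
  · linear_combination d * e00 - b * e10 + a * e11 - c * e01 + ξ' * htrg'
      - (p + s) * hdetg' - ξ * htrh'

lemma inv_mul_J (ξ' : F) (hJ : (!![ξ', 1; 0, ξ'] : Matrix (Fin 2) (Fin 2) F).det ≠ 0)
    (u : GL (Fin 2) F) (a b c d : F)
    (hu : (u : Matrix (Fin 2) (Fin 2) F) = !![a, b; c, d]) :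
    ((u⁻¹ * mkGL !![ξ', 1; 0, ξ'] hJ : GL (Fin 2) F) : Matrix (Fin 2) (Fin 2) F)
      = (a * d - b * c)⁻¹ • !![d * ξ', d - b * ξ'; -c * ξ', -c + a * ξ'] := by
  have h1 : ((u⁻¹ : GL (Fin 2) F) : Matrix (Fin 2) (Fin 2) F)
      = ((u : Matrix (Fin 2) (Fin 2) F))⁻¹ := Matrix.coe_units_inv u
  rw [Units.val_mul, h1, hu, mkGL_val, Matrix.inv_def, Matrix.adjugate_fin_two,
    Matrix.det_fin_two_of, Ring.inverse_eq_inv', Matrix.smul_mul]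
  congr 1
  ext i j
  fin_cases i <;> fin_cases j <;>
    simp [Matrix.mul_apply, Fin.sum_univ_two] <;> ring

lemma pair_mem (ξ η ξ' : F) (hξ : ξ ≠ 0) (hη : η ≠ 0)
    (hJ : (!![ξ', 1; 0, ξ'] : Matrix (Fin 2) (Fin 2) F).det ≠ 0)
    (hcond : ξ' ^ 2 = ξ * η)
    (a b c d : F) (h1 : a + d = ξ + 1) (h2 : a * d - b * c = ξ)
    (h3 : c = ξ' * (ξ + 1) - ξ * (η + 1))
    (g : GL (Fin 2) F) (hg : (g : Matrix (Fin 2) (Fin 2) F) = !![a, b; c, d])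
    (hg1 : (!![a, b; c, d] : Matrix (Fin 2) (Fin 2) F) ≠ 1)
    (hh1 : (ξ⁻¹ • !![d * ξ', d - b * ξ'; -c * ξ', -c + a * ξ'] : Matrix (Fin 2) (Fin 2) F) ≠ 1) :
    (∃ z : GL (Fin 2) F, ((z * g * z⁻¹ : GL (Fin 2) F) : Matrix (Fin 2) (Fin 2) F) = refl2 ξ) ∧
    (∃ z : GL (Fin 2) F,
      ((z * (g⁻¹ * mkGL !![ξ', 1; 0, ξ'] hJ) * z⁻¹ : GL (Fin 2) F) : Matrix (Fin 2) (Fin 2) F)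
        = refl2 η) ∧
    ((g * (g⁻¹ * mkGL !![ξ', 1; 0, ξ'] hJ) : GL (Fin 2) F) : Matrix (Fin 2) (Fin 2) F)
      = !![ξ', 1; 0, ξ'] := by
  have hval := inv_mul_J ξ' hJ g a b c d hg
  rw [h2] at hval
  refine ⟨(conj_iff ξ hξ g).mpr ⟨?_, ?_, ?_⟩, (conj_iff η hη _).mpr ⟨?_, ?_, ?_⟩, ?_⟩
  · rw [hg, Matrix.trace_fin_two_of]; exact h1
  · rw [hg, Matrix.det_fin_two_of]; exact h2
  · rw [hg]; exact hg1
  · rw [hval, Matrix.trace_smul, Matrix.trace_fin_two_of, smul_eq_mul]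
    field_simp
    linear_combination ξ' * h1 - h3
  · rw [hval, Matrix.det_smul, Matrix.det_fin_two_of, Fintype.card_fin]
    field_simp
    linear_combination ξ' ^ 2 * h2 + ξ * hcond
  · rw [hval]; exact hh1
  · have hgg : g * (g⁻¹ * mkGL !![ξ', 1; 0, ξ'] hJ) = mkGL !![ξ', 1; 0, ξ'] hJ := by group
    rw [hgg, mkGL_val]


/-- The number of pairs `(g, h)` in `GL_2(𝔽_q)` with `g ∼ r(ξ)`, `h ∼ r(η)` and
`g·h = [[ξ′, 1], [0, ξ′]]` (where `ξ′ ∉ {0, 1}`): it is `2q` if `ξ = η = ξ′`;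
`q` if `ξ′² = ξη` and `ξ′ ∉ {ξ, η}`; and `0` otherwise. -/
theorem structure_constant_two_reflections_jordan (q : ℕ) (hq : Fintype.card F = q)
    (ξ η ξ' : F) (hξ : ξ ≠ 0) (hη : η ≠ 0) (hξ'0 : ξ' ≠ 0) (hξ'1 : ξ' ≠ 1) :
    Nat.card {gh : GL (Fin 2) F × GL (Fin 2) F |
      (∃ z : GL (Fin 2) F,
        ((z * gh.1 * z⁻¹ : GL (Fin 2) F) : Matrix (Fin 2) (Fin 2) F) = refl2 ξ) ∧
      (∃ z : GL (Fin 2) F,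
        ((z * gh.2 * z⁻¹ : GL (Fin 2) F) : Matrix (Fin 2) (Fin 2) F) = refl2 η) ∧
      ((gh.1 * gh.2 : GL (Fin 2) F) : Matrix (Fin 2) (Fin 2) F) = !![ξ', 1; 0, ξ']} =
    if ξ = η ∧ ξ' = ξ then 2 * q
    else if ξ' ^ 2 = ξ * η ∧ ξ' ≠ ξ ∧ ξ' ≠ η then q
    else 0 := by
  have hJ : (!![ξ', 1; 0, ξ'] : Matrix (Fin 2) (Fin 2) F).det ≠ 0 := by
    rw [Matrix.det_fin_two_of]
    simpa using fun h => hξ'0 h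
  set JU : GL (Fin 2) F := mkGL !![ξ', 1; 0, ξ'] hJ with hJU
  by_cases hA : ξ = η ∧ ξ' = ξ
  · rw [if_pos hA]
    obtain ⟨hA1, hA2⟩ := hA
    have hξ1 : ξ ≠ 1 := fun hh => hξ'1 (hA2.trans hh)
    have hcond : ξ' ^ 2 = ξ * η := by linear_combination (ξ' + ξ) * hA2 + ξ * hA1
    have hd1 : (!![ξ, 0; 0, 1] : Matrix (Fin 2) (Fin 2) F).det ≠ 0 := by
      rw [Matrix.det_fin_two_of]; simpa using hξ
    have hdet1 : ∀ b : F, (!![ξ, b; 0, 1] : Matrix (Fin 2) (Fin 2) F).det ≠ 0 := by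
      intro b; rw [Matrix.det_fin_two_of]; simpa using hξ
    have hdet2 : ∀ b : F, (!![1, b; 0, ξ] : Matrix (Fin 2) (Fin 2) F).det ≠ 0 := by
      intro b; rw [Matrix.det_fin_two_of]; simpa using hξ
    set G : F ⊕ F → GL (Fin 2) F := fun v =>
      Sum.rec (fun b => mkGL _ (hdet1 b)) (fun b => mkGL _ (hdet2 b)) v with hG
    have hmemf : ∀ v : F ⊕ F, ((G v, (G v)⁻¹ * JU) : GL (Fin 2) F × GL (Fin 2) F) ∈
        {gh : GL (Fin 2) F × GL (Fin 2) F |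
          (∃ z : GL (Fin 2) F,
            ((z * gh.1 * z⁻¹ : GL (Fin 2) F) : Matrix (Fin 2) (Fin 2) F) = refl2 ξ) ∧
          (∃ z : GL (Fin 2) F,
            ((z * gh.2 * z⁻¹ : GL (Fin 2) F) : Matrix (Fin 2) (Fin 2) F) = refl2 η) ∧
          ((gh.1 * gh.2 : GL (Fin 2) F) : Matrix (Fin 2) (Fin 2) F) = !![ξ', 1; 0, ξ']} := by
      rintro (b | b)
      · refine pair_mem ξ η ξ' hξ hη hJ hcond ξ b 0 1 (by ring) (by ring)
          (by linear_combination -(ξ + 1) * hA2 - ξ * hA1) (G (Sum.inl b)) rfl ?_ ?_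
        · intro hcontra
          apply hξ1
          have := congrFun (congrFun hcontra 0) 0
          simpa [Matrix.one_apply] using this
        · intro hcontra
          apply hξ'1
          have h2 := congrFun (congrFun hcontra 1) 1
          simp [Matrix.one_apply] at h2
          field_simp at h2
          exact h2
      · refine pair_mem ξ η ξ' hξ hη hJ hcond 1 b 0 ξ (by ring) (by ring)
          (by linear_combination -(ξ + 1) * hA2 - ξ * hA1) (G (Sum.inr b)) rfl ?_ ?_
        · intro hcontra
          apply hξ1
          have := congrFun (congrFun hcontra 1) 1
          simpa [Matrix.one_apply] using this
        · intro hcontra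
          apply hξ'1
          have h2 := congrFun (congrFun hcontra 0) 0
          simp [Matrix.one_apply] at h2
          field_simp at h2
          exact h2
    set f : F ⊕ F → {gh : GL (Fin 2) F × GL (Fin 2) F |
          (∃ z : GL (Fin 2) F,
            ((z * gh.1 * z⁻¹ : GL (Fin 2) F) : Matrix (Fin 2) (Fin 2) F) = refl2 ξ) ∧
          (∃ z : GL (Fin 2) F,
            ((z * gh.2 * z⁻¹ : GL (Fin 2) F) : Matrix (Fin 2) (Fin 2) F) = refl2 η) ∧
          ((gh.1 * gh.2 : GL (Fin 2) F) : Matrix (Fin 2) (Fin 2) F) = !![ξ', 1; 0, ξ']} :=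
      fun v => ⟨(G v, (G v)⁻¹ * JU), hmemf v⟩ with hf
    have finj : Function.Injective f := by
      intro v w hvw
      have h00 := congrArg (fun x => ((x : GL (Fin 2) F × GL (Fin 2) F).1
        : Matrix (Fin 2) (Fin 2) F) 0 0) (congrArg Subtype.val hvw)
      have h01 := congrArg (fun x => ((x : GL (Fin 2) F × GL (Fin 2) F).1
        : Matrix (Fin 2) (Fin 2) F) 0 1) (congrArg Subtype.val hvw)
      cases v <;> cases w <;> simp [hf, hG] at h00 h01 ⊢
      · exact h01
      · exact absurd h00 hξ1
      · exact absurd h00.symm hξ1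
      · exact h01
    have fsurj : Function.Surjective f := by
      rintro ⟨⟨g, h⟩, hgmem, hhmem, hm⟩
      dsimp only at hgmem hhmem hm
      rw [conj_iff ξ hξ] at hgmem
      rw [conj_iff η hη] at hhmem
      obtain ⟨htrg, hdetg, hgne⟩ := hgmem
      obtain ⟨htrh, hdeth, hhne⟩ := hhmem
      obtain ⟨-, hc⟩ := sol_form ξ η ξ' g h htrg hdetg htrh hdeth hm
      rw [Matrix.trace_fin_two] at htrg
      rw [Matrix.det_fin_two] at hdetg
      have hghJ : g * h = JU := Units.ext hm
      have hc0 : (g : Matrix (Fin 2) (Fin 2) F) 1 0 = 0 := by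
        linear_combination hc + (ξ + 1) * hA2 + ξ * hA1
      have had : ((g : Matrix (Fin 2) (Fin 2) F) 0 0 - ξ)
          * ((g : Matrix (Fin 2) (Fin 2) F) 0 0 - 1) = 0 := by
        linear_combination (g : Matrix (Fin 2) (Fin 2) F) 0 0 * htrg - hdetg
          - (g : Matrix (Fin 2) (Fin 2) F) 0 1 * hc0
      rcases mul_eq_zero.mp had with ha | ha
      · have ha := sub_eq_zero.mp ha
        refine ⟨Sum.inl ((g : Matrix (Fin 2) (Fin 2) F) 0 1), ?_⟩
        have hgval : ((G (Sum.inl ((g : Matrix (Fin 2) (Fin 2) F) 0 1)))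
            : Matrix (Fin 2) (Fin 2) F) = (g : Matrix (Fin 2) (Fin 2) F) := by
          rw [hG]
          dsimp only
          rw [mkGL_val]
          ext i j
          fin_cases i <;> fin_cases j
          · exact ha.symm
          · rfl
          · exact hc0.symm
          · show (1 : F) = (g : Matrix (Fin 2) (Fin 2) F) 1 1
            linear_combination -htrg + ha
        have hGa : G (Sum.inl ((g : Matrix (Fin 2) (Fin 2) F) 0 1)) = g := Units.ext hgval
        have hh2 : h = (G (Sum.inl ((g : Matrix (Fin 2) (Fin 2) F) 0 1)))⁻¹ * JU := by
          rw [hGa, ← hghJ]; group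
        exact Subtype.ext (Prod.ext hGa hh2.symm)
      · have ha := sub_eq_zero.mp ha
        refine ⟨Sum.inr ((g : Matrix (Fin 2) (Fin 2) F) 0 1), ?_⟩
        have hgval : ((G (Sum.inr ((g : Matrix (Fin 2) (Fin 2) F) 0 1)))
            : Matrix (Fin 2) (Fin 2) F) = (g : Matrix (Fin 2) (Fin 2) F) := by
          rw [hG]
          dsimp only
          rw [mkGL_val]
          ext i j
          fin_cases i <;> fin_cases j
          · exact ha.symm
          · rfl
          · exact hc0.symm
          · show ξ = (g : Matrix (Fin 2) (Fin 2) F) 1 1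
            linear_combination -htrg + ha
        have hGa : G (Sum.inr ((g : Matrix (Fin 2) (Fin 2) F) 0 1)) = g := Units.ext hgval
        have hh2 : h = (G (Sum.inr ((g : Matrix (Fin 2) (Fin 2) F) 0 1)))⁻¹ * JU := by
          rw [hGa, ← hghJ]; group
        exact Subtype.ext (Prod.ext hGa hh2.symm)
    rw [Nat.card_congr (Equiv.ofBijective f ⟨finj, fsurj⟩).symm, Nat.card_sum,
      Nat.card_eq_fintype_card, hq, two_mul]
  · rw [if_neg hA]
    by_cases hB : ξ' ^ 2 = ξ * η ∧ ξ' ≠ ξ ∧ ξ' ≠ η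
    · rw [if_pos hB]
      obtain ⟨hcond, hxξ, hxη⟩ := hB
      set c₀ : F := ξ' * (ξ + 1) - ξ * (η + 1) with hc₀
      have hc₀alt : c₀ = (ξ - ξ') * (ξ' - 1) := by rw [hc₀]; linear_combination hcond
      have hc₀0 : c₀ ≠ 0 := by
        rw [hc₀alt]
        exact mul_ne_zero (sub_ne_zero.mpr fun hh => hxξ hh.symm) (sub_ne_zero.mpr hξ'1)
      have hdetval : ∀ a : F,
          (!![a, (a * (ξ + 1 - a) - ξ) / c₀; c₀, ξ + 1 - a] : Matrix (Fin 2) (Fin 2) F).det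
            = ξ := by
        intro a
        rw [Matrix.det_fin_two_of, div_mul_cancel₀ _ hc₀0]
        ring
      have hdetG : ∀ a : F,
          (!![a, (a * (ξ + 1 - a) - ξ) / c₀; c₀, ξ + 1 - a] : Matrix (Fin 2) (Fin 2) F).det
            ≠ 0 := fun a => by rw [hdetval a]; exact hξ
      set G : F → GL (Fin 2) F := fun a => mkGL _ (hdetG a) with hG
      have hmemf : ∀ a : F, ((G a, (G a)⁻¹ * JU) : GL (Fin 2) F × GL (Fin 2) F) ∈
          {gh : GL (Fin 2) F × GL (Fin 2) F |
            (∃ z : GL (Fin 2) F,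
              ((z * gh.1 * z⁻¹ : GL (Fin 2) F) : Matrix (Fin 2) (Fin 2) F) = refl2 ξ) ∧
            (∃ z : GL (Fin 2) F,
              ((z * gh.2 * z⁻¹ : GL (Fin 2) F) : Matrix (Fin 2) (Fin 2) F) = refl2 η) ∧
            ((gh.1 * gh.2 : GL (Fin 2) F) : Matrix (Fin 2) (Fin 2) F) = !![ξ', 1; 0, ξ']} := by
        intro a
        refine pair_mem ξ η ξ' hξ hη hJ hcond a ((a * (ξ + 1 - a) - ξ) / c₀) c₀ (ξ + 1 - a)
          (by ring) ?_ rfl (G a) rfl ?_ ?_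
        · rw [div_mul_cancel₀ _ hc₀0]; ring
        · intro hcontra
          apply hc₀0
          have := congrFun (congrFun hcontra 1) 0
          simpa [Matrix.one_apply] using this
        · intro hcontra
          have h2 := congrFun (congrFun hcontra 1) 0
          simp [Matrix.one_apply] at h2
          rcases h2 with h2 | h2 | h2
          · exact hξ h2
          · exact hc₀0 h2
          · exact hξ'0 h2
      set f : F → {gh : GL (Fin 2) F × GL (Fin 2) F |
            (∃ z : GL (Fin 2) F,
              ((z * gh.1 * z⁻¹ : GL (Fin 2) F) : Matrix (Fin 2) (Fin 2) F) = refl2 ξ) ∧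
            (∃ z : GL (Fin 2) F,
              ((z * gh.2 * z⁻¹ : GL (Fin 2) F) : Matrix (Fin 2) (Fin 2) F) = refl2 η) ∧
            ((gh.1 * gh.2 : GL (Fin 2) F) : Matrix (Fin 2) (Fin 2) F) = !![ξ', 1; 0, ξ']} :=
        fun a => ⟨(G a, (G a)⁻¹ * JU), hmemf a⟩ with hf
      have finj : Function.Injective f := by
        intro a1 a2 hfe
        have := congrArg (fun x => ((x : GL (Fin 2) F × GL (Fin 2) F).1
          : Matrix (Fin 2) (Fin 2) F) 0 0) (congrArg Subtype.val hfe)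
        simpa [hf, hG] using this
      have fsurj : Function.Surjective f := by
        rintro ⟨⟨g, h⟩, hgmem, hhmem, hm⟩
        dsimp only at hgmem hhmem hm
        rw [conj_iff ξ hξ] at hgmem
        rw [conj_iff η hη] at hhmem
        obtain ⟨htrg, hdetg, hgne⟩ := hgmem
        obtain ⟨htrh, hdeth, hhne⟩ := hhmem
        obtain ⟨-, hc⟩ := sol_form ξ η ξ' g h htrg hdetg htrh hdeth hm
        rw [Matrix.trace_fin_two] at htrg
        rw [Matrix.det_fin_two] at hdetg
        refine ⟨(g : Matrix (Fin 2) (Fin 2) F) 0 0, ?_⟩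
        have hgval : ((G ((g : Matrix (Fin 2) (Fin 2) F) 0 0)) : Matrix (Fin 2) (Fin 2) F)
            = (g : Matrix (Fin 2) (Fin 2) F) := by
          rw [hG]
          dsimp only
          rw [mkGL_val]
          ext i j
          fin_cases i <;> fin_cases j
          · rfl
          · show ((g : Matrix (Fin 2) (Fin 2) F) 0 0
                * (ξ + 1 - (g : Matrix (Fin 2) (Fin 2) F) 0 0) - ξ) / c₀
              = (g : Matrix (Fin 2) (Fin 2) F) 0 1
            rw [div_eq_iff hc₀0, hc₀]
            linear_combination hdetg - (g : Matrix (Fin 2) (Fin 2) F) 0 0 * htrg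
              + (g : Matrix (Fin 2) (Fin 2) F) 0 1 * hc
          · show c₀ = (g : Matrix (Fin 2) (Fin 2) F) 1 0
            rw [hc₀]; exact hc.symm
          · show ξ + 1 - (g : Matrix (Fin 2) (Fin 2) F) 0 0
              = (g : Matrix (Fin 2) (Fin 2) F) 1 1
            linear_combination -htrg
        have hGa : G ((g : Matrix (Fin 2) (Fin 2) F) 0 0) = g := Units.ext hgval
        have hghJ : g * h = JU := Units.ext hm
        have hh2 : h = (G ((g : Matrix (Fin 2) (Fin 2) F) 0 0))⁻¹ * JU := by
          rw [hGa, ← hghJ]; group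
        exact Subtype.ext (Prod.ext hGa hh2.symm)
      rw [Nat.card_congr (Equiv.ofBijective f ⟨finj, fsurj⟩).symm,
        Nat.card_eq_fintype_card, hq]
    · rw [if_neg hB]
      have : IsEmpty {gh : GL (Fin 2) F × GL (Fin 2) F |
          (∃ z : GL (Fin 2) F,
            ((z * gh.1 * z⁻¹ : GL (Fin 2) F) : Matrix (Fin 2) (Fin 2) F) = refl2 ξ) ∧
          (∃ z : GL (Fin 2) F,
            ((z * gh.2 * z⁻¹ : GL (Fin 2) F) : Matrix (Fin 2) (Fin 2) F) = refl2 η) ∧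
          ((gh.1 * gh.2 : GL (Fin 2) F) : Matrix (Fin 2) (Fin 2) F) = !![ξ', 1; 0, ξ']} := by
      -- empty
        constructor
        rintro ⟨⟨g, h⟩, hg, hh, hm⟩
        rw [conj_iff ξ hξ] at hg
        rw [conj_iff η hη] at hh
        obtain ⟨hcond, -⟩ := sol_form ξ η ξ' g h hg.1 hg.2.1 hh.1 hh.2.1 hm
        have hor : ξ' = ξ ∨ ξ' = η := by
          by_contra hno
          push_neg at hno
          exact hB ⟨hcond, hno.1, hno.2⟩
        rcases hor with h1 | h1
        · have hee : ξ = η := by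
            apply mul_left_cancel₀ hξ
            linear_combination hcond - (ξ' + ξ) * h1
          exact hA ⟨hee, h1⟩
        · have hee : ξ = η := by
            apply mul_right_cancel₀ hη
            linear_combination -hcond + (ξ' + η) * h1
          exact hA ⟨hee, h1.trans hee.symm⟩
      exact Nat.card_of_isEmpty
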